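/- Let $A$ be a ring with a Frobenius-like ring endomorphism $\varphi$, let $F$ be a field containing $A$ to which $\varphi$ extends, and suppose $Y \in M_d(F)$, $B, C \in M_d(A)$ satisfy $\varphi(Y) = YB + C$, where $A$ is a valuation ring of $F$ and $\varphi$ multiplies valuations by $p > 1$ (i.e., $v(\varphi(x)) = p\, v(x)$ for all $x \in F$). Then $Y \in M_d(A)$. -/
import Mathlib


/-- Lemma 6.4: if a matrix `Y` over a valued field `F` satisfies the twisted
equation `φ(Y) = Y*B + C` with `B`, `C` integral (entries of nonnegative valuation),
and `φ` multiplies (additive) valuations by `p > 1`, then `Y` is integral. -/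
theorem stmt_0 {F : Type*} [Field F] (p : ℕ) (hp : 1 < p)
    (v : AddValuation F (WithTop ℤ)) (φ : F →+* F)
    (hφ : ∀ x : F, v (φ x) = p • v x)
    {d : ℕ} (Y B C : Matrix (Fin d) (Fin d) F)
    (hB : ∀ i j, 0 ≤ v (B i j)) (hC : ∀ i j, 0 ≤ v (C i j))
    (heq : Y.map φ = Y * B + C) :
    ∀ i j, 0 ≤ v (Y i j) := by
  by_contra hbad
  push_neg at hbad
  obtain ⟨i₀, j₀, hij⟩ := hbad
  -- pick entry of minimal valuation
  obtain ⟨⟨i, j⟩, -, hmin⟩ := Finset.exists_min_image (Finset.univ : Finset (Fin d × Fin d))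
    (fun q => v (Y q.1 q.2)) ⟨(i₀, j₀), Finset.mem_univ _⟩
  have hmin' : ∀ a b, v (Y i j) ≤ v (Y a b) := fun a b => hmin (a, b) (Finset.mem_univ _)
  have hneg : v (Y i j) < 0 := lt_of_le_of_lt (hmin' i₀ j₀) hij
  set m := v (Y i j) with hm
  -- m is a genuine integer
  have hmtop : m ≠ ⊤ := by
    intro h
    rw [h] at hneg
    exact not_top_lt hneg
  obtain ⟨m0, hme⟩ := WithTop.ne_top_iff_exists.mp hmtop
  rw [← hme] at hneg hmin'
  have hm0 : m0 < 0 := by exact_mod_cast hneg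
  -- valuation of (Y*B + C) i j is ≥ m
  have h1 : (m0 : WithTop ℤ) ≤ v ((Y * B + C) i j) := by
    apply v.map_le_add
    · show (m0 : WithTop ℤ) ≤ v (∑ k, Y i k * B k j)
      apply v.map_le_sum
      intro k _
      rw [v.map_mul]
      calc (m0 : WithTop ℤ) = m0 + 0 := by rw [add_zero]
        _ ≤ v (Y i k) + v (B k j) := add_le_add (hmin' i k) (hB k j)
    · exact le_trans (le_of_lt hneg) (hC i j)
  have h2 : v ((Y * B + C) i j) = v (φ (Y i j)) := by
    have := congrArg (fun M => M i j) heq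
    simp [Matrix.map_apply] at this
    rw [this, Matrix.add_apply]
  rw [h2, hφ, ← hm, ← hme] at h1
  have h3 : p • ((m0 : WithTop ℤ)) = ((p * m0 : ℤ) : WithTop ℤ) := by
    norm_cast
  rw [h3] at h1
  have h1' : (m0 : ℤ) ≤ p * m0 := by exact_mod_cast h1
  nlinarith [hm0, hp]
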